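/- Let p be an odd prime, e ≥ 1, and let t, a ∈ Sym(ℤ/p^eℤ) be defined by t(x) = x + 1 and a(x) = (p+1)x. Then for any j with 0 ≤ j < p^(e-1), the permutation t∘a^j has order p^e (hence is a cycle of length p^e). -/

import Mathlib

open Finset

lemma key_arith (p e : ℕ) (hp : p.Prime) (hodd : Odd p) (he : 1 ≤ e) (U : ℤ)
    (hU : (p : ℤ) ∣ U - 1) (hU1 : 1 ≤ U) :
    ((p:ℤ)^e ∣ ∑ i ∈ range (p^e), U^i) ∧ ¬((p:ℤ)^e ∣ ∑ i ∈ range (p^(e-1)), U^i)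
      ∧ ((p:ℤ)^e ∣ U^(p^e) - 1) := by
  have hpint : Prime (p : ℤ) := Nat.prime_iff_prime_int.mp hp
  rcases eq_or_lt_of_le hU1 with h1 | h1
  · subst h1
    refine ⟨?_, ?_, by simp⟩
    · simp only [one_pow, Finset.sum_const, Finset.card_range, nsmul_eq_mul, mul_one]
      push_cast
      exact dvd_rfl
    · simp only [one_pow, Finset.sum_const, Finset.card_range, nsmul_eq_mul, mul_one]
      rw [show ((p:ℤ)^e) = ((p^e : ℕ) : ℤ) by push_cast; ring, Int.natCast_dvd_natCast]
      intro hdvd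
      have h2 := Nat.le_of_dvd (pow_pos hp.pos _) hdvd
      have h3 : p ^ (e-1) < p ^ e := Nat.pow_lt_pow_right hp.one_lt (by omega)
      omega
  · -- U > 1
    have hUne : U - 1 ≠ 0 := by omega
    have hpx : ¬ (p:ℤ) ∣ U := by
      intro hdvd
      have : (p:ℤ) ∣ 1 := (dvd_sub_right hdvd).mp (by simpa using hU)
      exact hpint.not_unit (isUnit_of_dvd_one this)
    have hLTE : ∀ n : ℕ, emultiplicity (p:ℤ) (U ^ n - 1) =
        emultiplicity (p:ℤ) (U - 1) + emultiplicity p n := by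
      intro n
      have := Int.emultiplicity_pow_sub_pow hp hodd (by simpa using hU) hpx n
      rwa [one_pow] at this
    have hfin : FiniteMultiplicity (p:ℤ) (U - 1) :=
      Int.finiteMultiplicity_iff.mpr ⟨by simpa using hp.ne_one, hUne⟩
    have hS : ∀ n : ℕ, emultiplicity (p:ℤ) (∑ i ∈ range n, U^i) = emultiplicity p n := by
      intro n
      have hmul : emultiplicity (p:ℤ) ((∑ i ∈ range n, U^i) * (U - 1)) =
          emultiplicity (p:ℤ) (∑ i ∈ range n, U^i) + emultiplicity (p:ℤ) (U - 1) :=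
        emultiplicity_mul hpint
      rw [geom_sum_mul, hLTE n, add_comm (emultiplicity (p:ℤ) (U-1))] at hmul
      exact (WithTop.add_right_cancel (finiteMultiplicity_iff_emultiplicity_ne_top.mp hfin) hmul).symm
    have hpp : ∀ k : ℕ, emultiplicity p (p ^ k) = k := fun k =>
      emultiplicity_pow_self hp.ne_zero hp.prime.not_unit k
    refine ⟨?_, ?_, ?_⟩
    · exact pow_dvd_of_le_emultiplicity (by rw [hS, hpp])
    · apply not_pow_dvd_of_emultiplicity_lt
      rw [hS, hpp]
      exact_mod_cast Nat.sub_lt (by omega) (by omega)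
    · apply pow_dvd_of_le_emultiplicity
      rw [hLTE, hpp]
      exact le_add_self

/-- For an odd prime `p`, `e ≥ 1`, the permutation `t ∘ a^j` of `ℤ/p^eℤ`, where
`t x = x + 1` and `a x = (p+1) * x`, has order `p^e` for any `0 ≤ j < p^(e-1)`. -/
theorem stmt_7 (p e : ℕ) (hp : p.Prime) (hodd : Odd p) (he : 1 ≤ e)
    (a : Equiv.Perm (ZMod (p ^ e))) (ha : ∀ x : ZMod (p ^ e), a x = (p + 1) * x)
    (j : ℕ) (hj : j < p ^ (e - 1)) :
    orderOf (Equiv.addLeft (1 : ZMod (p ^ e)) * a ^ j) = p ^ e := by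
  haveI : NeZero (p ^ e) := ⟨pow_ne_zero e hp.ne_zero⟩
  set f := Equiv.addLeft (1 : ZMod (p ^ e)) * a ^ j with hf
  set U : ℤ := ((p : ℤ) + 1) ^ j with hUdef
  set u : ZMod (p ^ e) := ((p : ZMod (p ^ e)) + 1) ^ j with hudef
  have hucast : ((U : ℤ) : ZMod (p ^ e)) = u := by rw [hUdef, hudef]; push_cast; ring
  have haj : ∀ (k : ℕ) (x : ZMod (p ^ e)),
      (a ^ k) x = ((p : ZMod (p ^ e)) + 1) ^ k * x := by
    intro k
    induction k with
    | zero => intro x; simp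
    | succ k ih =>
      intro x
      rw [pow_succ, Equiv.Perm.mul_apply, ha, ih, pow_succ]
      ring
  have hfx : ∀ x : ZMod (p ^ e), f x = u * x + 1 := by
    intro x
    rw [hf, Equiv.Perm.mul_apply, haj, Equiv.coe_addLeft, hudef]
    ring
  have hfn : ∀ (n : ℕ) (x : ZMod (p ^ e)),
      (f ^ n) x = u ^ n * x + ∑ i ∈ Finset.range n, u ^ i := by
    intro n
    induction n with
    | zero => intro x; simp
    | succ k ih =>
      intro x
      rw [pow_succ, Equiv.Perm.mul_apply, hfx, ih, geom_sum_succ']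
      ring
  obtain ⟨hd1, hd2, hd3⟩ := key_arith p e hp hodd he U
    (by simpa using sub_dvd_pow_sub_pow ((p : ℤ) + 1) 1 j)
    (one_le_pow₀ (by omega))
  have hcast : ∀ z : ℤ, ((z : ℤ) : ZMod (p ^ e)) = 0 ↔ ((p : ℤ) ^ e ∣ z) := by
    intro z
    rw [ZMod.intCast_zmod_eq_zero_iff_dvd]
    push_cast
    rfl
  have hSz : ∀ n : ℕ, ((∑ i ∈ Finset.range n, U ^ i : ℤ) : ZMod (p ^ e)) =
      ∑ i ∈ Finset.range n, u ^ i := by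
    intro n
    push_cast [hucast]
    rfl
  have hone : f ^ (p ^ e) = 1 := by
    ext x
    rw [hfn]
    have h1 : u ^ (p ^ e) = 1 := by
      have : ((U ^ (p ^ e) - 1 : ℤ) : ZMod (p ^ e)) = 0 := (hcast _).mpr hd3
      push_cast [hucast] at this
      linear_combination this
    have h2 : (∑ i ∈ Finset.range (p ^ e), u ^ i) = 0 := by
      rw [← hSz]; exact (hcast _).mpr hd1
    simp [h1, h2]
  have hne : f ^ (p ^ (e - 1)) ≠ 1 := by
    intro hcontra
    have : (f ^ (p ^ (e - 1))) 0 = 0 := by rw [hcontra]; rfl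
    rw [hfn] at this
    simp only [mul_zero, zero_add] at this
    rw [← hSz] at this
    exact hd2 ((hcast _).mp this)
  have hdvd : orderOf f ∣ p ^ e := orderOf_dvd_of_pow_eq_one hone
  obtain ⟨k, hk, hfk⟩ := (Nat.dvd_prime_pow hp).mp hdvd
  rcases eq_or_lt_of_le hk with h | h
  · rw [hfk, h]
  · exfalso
    apply hne
    have : p ^ (e - 1) = p ^ k * p ^ (e - 1 - k) := by
      rw [← pow_add]
      congr 1
      omega
    rw [this, pow_mul, ← hfk, pow_orderOf_eq_one, one_pow]
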